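/- Let X be a real Banach space and let Y = Y₁ ⊕_a Y₂ be the absolute sum of real Banach spaces Y₁ and Y₂ with respect to an absolute norm N (so Y₁ is an absolute summand of Y). If the pair (X, Y₁ ⊕_a Y₂) has the Bishop–Phelps–Bollobás property for compact operators, then the pair (X, Y₁) has the Bishop–Phelps–Bollobás property for compact operators. -/

import Mathlib

open Filter Topology

/-- `N` is an absolute norm on `ℝ²`: a norm with `N(1,0)=N(0,1)=1` and
`N(s,t)=N(|s|,|t|)`. -/
structure IsAbsoluteNorm (N : ℝ → ℝ → ℝ) : Prop where
  nonneg : ∀ s t : ℝ, 0 ≤ N s t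
  eq_zero_iff : ∀ s t : ℝ, N s t = 0 ↔ s = 0 ∧ t = 0
  triangle : ∀ s₁ t₁ s₂ t₂ : ℝ, N (s₁ + s₂) (t₁ + t₂) ≤ N s₁ t₁ + N s₂ t₂
  smul : ∀ c s t : ℝ, N (c * s) (c * t) = |c| * N s t
  one_zero : N 1 0 = 1
  zero_one : N 0 1 = 1
  abs_eq : ∀ s t : ℝ, N s t = N |s| |t|

/-- The pair `(X, Y)` has the Bishop–Phelps–Bollobás property for compact operators. -/
def HasBPBpCompact (X Y : Type*) [NormedAddCommGroup X] [NormedSpace ℝ X]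
    [NormedAddCommGroup Y] [NormedSpace ℝ Y] : Prop :=
  ∀ ε : ℝ, 0 < ε → ∃ η : ℝ, 0 < η ∧
    ∀ (T : X →L[ℝ] Y) (x₀ : X), IsCompactOperator (⇑T) →
      ‖T‖ = 1 → ‖x₀‖ = 1 → 1 - η < ‖T x₀‖ →
      ∃ (S : X →L[ℝ] Y) (x₁ : X), IsCompactOperator (⇑S) ∧
        ‖S‖ = 1 ∧ ‖x₁‖ = 1 ∧ ‖S x₁‖ = 1 ∧ ‖x₁ - x₀‖ < ε ∧ ‖S - T‖ < ε

namespace BPBAux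

variable {N : ℝ → ℝ → ℝ}

lemma neg_left (hN : IsAbsoluteNorm N) (s t : ℝ) : N (-s) t = N s t := by
  rw [hN.abs_eq (-s) t, abs_neg, ← hN.abs_eq]

lemma neg_right (hN : IsAbsoluteNorm N) (s t : ℝ) : N s (-t) = N s t := by
  rw [hN.abs_eq s (-t), abs_neg, ← hN.abs_eq]

lemma left_zero (hN : IsAbsoluteNorm N) (s : ℝ) : N s 0 = |s| := by
  have h := hN.smul s 1 0
  simpa [hN.one_zero] using h

lemma zero_right (hN : IsAbsoluteNorm N) (t : ℝ) : N 0 t = |t| := by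
  have h := hN.smul t 0 1
  simpa [hN.zero_one] using h

lemma mono_left (hN : IsAbsoluteNorm N) {s₁ s₂ : ℝ} (t : ℝ) (h : |s₁| ≤ s₂) :
    N s₁ t ≤ N s₂ t := by
  rcases eq_or_lt_of_le ((abs_nonneg s₁).trans h) with h0 | h0
  · have hs1 : s₁ = 0 := abs_eq_zero.1 (le_antisymm (h.trans h0.symm.le) (abs_nonneg _))
    rw [hs1, ← h0]
  · set lam := (s₂ + s₁) / (2 * s₂) with hlam_def
    set mu := (s₂ - s₁) / (2 * s₂) with hmu_def
    have hs₂ : (0 : ℝ) < s₂ := h0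
    have habs := abs_le.1 h
    have hlam : 0 ≤ lam := by
      apply div_nonneg <;> nlinarith [habs.1, habs.2]
    have hmu : 0 ≤ mu := by
      apply div_nonneg <;> nlinarith [habs.1, habs.2]
    have hlm : lam + mu = 1 := by
      rw [hlam_def, hmu_def, ← add_div, div_eq_iff (ne_of_gt (by linarith : (0:ℝ) < 2 * s₂))]
      ring
    have h1 : lam * s₂ + mu * (-s₂) = s₁ := by
      rw [hlam_def, hmu_def, div_mul_eq_mul_div, div_mul_eq_mul_div, ← add_div,
        div_eq_iff (ne_of_gt (by linarith : (0:ℝ) < 2 * s₂))]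
      ring
    have h2 : lam * t + mu * t = t := by
      rw [← add_mul, hlm, one_mul]
    calc N s₁ t = N (lam * s₂ + mu * (-s₂)) (lam * t + mu * t) := by rw [h1, h2]
      _ ≤ N (lam * s₂) (lam * t) + N (mu * (-s₂)) (mu * t) := hN.triangle _ _ _ _
      _ = lam * N s₂ t + mu * N (-s₂) t := by
          rw [hN.smul, hN.smul, abs_of_nonneg hlam, abs_of_nonneg hmu]
      _ = (lam + mu) * N s₂ t := by rw [neg_left hN]; ring
      _ = N s₂ t := by rw [hlm, one_mul]

lemma mono_right (hN : IsAbsoluteNorm N) (s : ℝ) {t₁ t₂ : ℝ} (h : |t₁| ≤ t₂) :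
    N s t₁ ≤ N s t₂ := by
  rcases eq_or_lt_of_le ((abs_nonneg t₁).trans h) with h0 | h0
  · have ht1 : t₁ = 0 := abs_eq_zero.1 (le_antisymm (h.trans h0.symm.le) (abs_nonneg _))
    rw [ht1, ← h0]
  · set lam := (t₂ + t₁) / (2 * t₂) with hlam_def
    set mu := (t₂ - t₁) / (2 * t₂) with hmu_def
    have ht₂ : (0 : ℝ) < t₂ := h0
    have habs := abs_le.1 h
    have hlam : 0 ≤ lam := by
      apply div_nonneg <;> nlinarith [habs.1, habs.2]
    have hmu : 0 ≤ mu := by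
      apply div_nonneg <;> nlinarith [habs.1, habs.2]
    have hlm : lam + mu = 1 := by
      rw [hlam_def, hmu_def, ← add_div, div_eq_iff (ne_of_gt (by linarith : (0:ℝ) < 2 * t₂))]
      ring
    have h1 : lam * t₂ + mu * (-t₂) = t₁ := by
      rw [hlam_def, hmu_def, div_mul_eq_mul_div, div_mul_eq_mul_div, ← add_div,
        div_eq_iff (ne_of_gt (by linarith : (0:ℝ) < 2 * t₂))]
      ring
    have h2 : lam * s + mu * s = s := by
      rw [← add_mul, hlm, one_mul]
    calc N s t₁ = N (lam * s + mu * s) (lam * t₂ + mu * (-t₂)) := by rw [h1, h2]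
      _ ≤ N (lam * s) (lam * t₂) + N (mu * s) (mu * (-t₂)) := hN.triangle _ _ _ _
      _ = lam * N s t₂ + mu * N s (-t₂) := by
          rw [hN.smul, hN.smul, abs_of_nonneg hlam, abs_of_nonneg hmu]
      _ = (lam + mu) * N s t₂ := by rw [neg_right hN]; ring
      _ = N s t₂ := by rw [hlm, one_mul]

lemma mono (hN : IsAbsoluteNorm N) {s₁ s₂ t₁ t₂ : ℝ} (hs : |s₁| ≤ s₂) (ht : |t₁| ≤ t₂) :
    N s₁ t₁ ≤ N s₂ t₂ :=
  (mono_left hN t₁ hs).trans (mono_right hN s₂ ht)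

/-- Supporting functional of the absolute norm at a point of the unit sphere in the
positive quadrant, with nonnegative coefficients. -/
lemma support (hN : IsAbsoluteNorm N) {a b : ℝ} (ha : 0 ≤ a) (hb : 0 ≤ b)
    (hab : N a b = 1) :
    ∃ p q : ℝ, 0 ≤ p ∧ 0 ≤ q ∧ p * a + q * b = 1 ∧
      ∀ s t : ℝ, 0 ≤ s → 0 ≤ t → p * s + q * t ≤ N s t := by
  have hne : ((a, b) : ℝ × ℝ) ≠ 0 := by
    intro hzero
    have ha0 : a = 0 := congrArg Prod.fst hzero
    have hb0 : b = 0 := congrArg Prod.snd hzero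
    rw [ha0, hb0] at hab
    have := (hN.eq_zero_iff 0 0).2 ⟨rfl, rfl⟩
    rw [this] at hab
    norm_num at hab
  set f : (ℝ × ℝ) →ₗ.[ℝ] ℝ := LinearPMap.mkSpanSingleton (a, b) 1 hne with hf_def
  obtain ⟨g, hg1, hg2⟩ := exists_extension_of_le_sublinear f (fun v => N v.1 v.2)
    (by
      intro c hc v
      have := hN.smul c v.1 v.2
      simpa [abs_of_pos hc, Prod.smul_def, smul_eq_mul] using this)
    (by
      intro v w
      exact hN.triangle _ _ _ _)
    (by
      rintro ⟨v, hv⟩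
      obtain ⟨c, hc⟩ := Submodule.mem_span_singleton.1 hv
      subst hc
      have happ : f ⟨c • (a, b), hv⟩ = c • (1 : ℝ) :=
        LinearPMap.mkSpanSingleton'_apply _ _ _ c hv
      rw [happ]
      show c • (1 : ℝ) ≤ N ((c • (a, b) : ℝ × ℝ)).1 ((c • (a, b) : ℝ × ℝ)).2
      have hval : N ((c • (a, b) : ℝ × ℝ)).1 ((c • (a, b) : ℝ × ℝ)).2 = |c| := by
        have := hN.smul c a b
        simpa [Prod.smul_def, smul_eq_mul, hab] using this
      rw [hval]
      simpa using le_abs_self c)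
  have hgab : g (a, b) = 1 := by
    have h1 := hg1 ⟨(a, b), Submodule.mem_span_singleton_self _⟩
    have h2 : (f ⟨(a, b), Submodule.mem_span_singleton_self _⟩ : ℝ) = 1 :=
      LinearPMap.mkSpanSingleton_apply ℝ ℝ hne 1
    exact h1.trans h2
  set p₀ := g (1, 0) with hp₀
  set q₀ := g (0, 1) with hq₀
  have hglin : ∀ s t : ℝ, g (s, t) = s * p₀ + t * q₀ := by
    intro s t
    have : ((s, t) : ℝ × ℝ) = s • ((1 : ℝ), (0 : ℝ)) + t • ((0 : ℝ), (1 : ℝ)) := by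
      simp [Prod.ext_iff]
    rw [this, map_add, map_smul, map_smul, smul_eq_mul, smul_eq_mul]
  refine ⟨max p₀ 0, max q₀ 0, le_max_right _ _, le_max_right _ _, ?_, ?_⟩
  · have hle : max p₀ 0 * a + max q₀ 0 * b ≤ N a b := by
      have hsupp : ∀ s t : ℝ, 0 ≤ s → 0 ≤ t → max p₀ 0 * s + max q₀ 0 * t ≤ N s t := by
        intro s t hs ht
        set s₀ := if 0 ≤ p₀ then s else 0 with hs₀
        set t₀ := if 0 ≤ q₀ then t else 0 with ht₀
        have h1 : max p₀ 0 * s = p₀ * s₀ := by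
          by_cases hp : 0 ≤ p₀ <;> simp [hs₀, hp, max_eq_left, max_eq_right, le_of_not_ge]
        have h2 : max q₀ 0 * t = q₀ * t₀ := by
          by_cases hq : 0 ≤ q₀ <;> simp [ht₀, hq, max_eq_left, max_eq_right, le_of_not_ge]
        rw [h1, h2]
        have h3 : p₀ * s₀ + q₀ * t₀ = g (s₀, t₀) := by rw [hglin]; ring
        rw [h3]
        refine (hg2 (s₀, t₀)).trans ?_
        apply mono hN
        · rw [abs_of_nonneg (by by_cases hp : 0 ≤ p₀ <;> simp [hs₀, hp, hs])]
          by_cases hp : 0 ≤ p₀ <;> simp [hs₀, hp, hs]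
        · rw [abs_of_nonneg (by by_cases hq : 0 ≤ q₀ <;> simp [ht₀, hq, ht])]
          by_cases hq : 0 ≤ q₀ <;> simp [ht₀, hq, ht]
      exact hsupp a b ha hb
    have hge : 1 ≤ max p₀ 0 * a + max q₀ 0 * b := by
      have : (1 : ℝ) = a * p₀ + b * q₀ := by rw [← hglin, hgab]
      nlinarith [le_max_left p₀ 0, le_max_left q₀ 0]
    rw [hab] at hle
    linarith
  · intro s t hs ht
    set s₀ := if 0 ≤ p₀ then s else 0 with hs₀
    set t₀ := if 0 ≤ q₀ then t else 0 with ht₀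
    have h1 : max p₀ 0 * s = p₀ * s₀ := by
      by_cases hp : 0 ≤ p₀ <;> simp [hs₀, hp, max_eq_left, max_eq_right, le_of_not_ge]
    have h2 : max q₀ 0 * t = q₀ * t₀ := by
      by_cases hq : 0 ≤ q₀ <;> simp [ht₀, hq, max_eq_left, max_eq_right, le_of_not_ge]
    rw [h1, h2]
    have h3 : p₀ * s₀ + q₀ * t₀ = g (s₀, t₀) := by rw [hglin]; ring
    rw [h3]
    refine (hg2 (s₀, t₀)).trans ?_
    apply mono hN
    · rw [abs_of_nonneg (by by_cases hp : 0 ≤ p₀ <;> simp [hs₀, hp, hs])]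
      by_cases hp : 0 ≤ p₀ <;> simp [hs₀, hp, hs]
    · rw [abs_of_nonneg (by by_cases hq : 0 ≤ q₀ <;> simp [ht₀, hq, ht])]
      by_cases hq : 0 ≤ q₀ <;> simp [ht₀, hq, ht]

lemma isCompactOperator_rankOne {X Z : Type*} [NormedAddCommGroup X] [NormedSpace ℝ X]
    [NormedAddCommGroup Z] [NormedSpace ℝ Z] (c : X →L[ℝ] ℝ) (z : Z) :
    IsCompactOperator fun x => c x • z := by
  refine ⟨(fun t : ℝ => t • z) '' Set.Icc (-(‖c‖ + 1)) (‖c‖ + 1),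
    isCompact_Icc.image (continuous_id.smul continuous_const), ?_⟩
  refine Filter.mem_of_superset (Metric.ball_mem_nhds 0 one_pos) ?_
  intro x hx
  refine ⟨c x, ?_, rfl⟩
  have hx1 : ‖x‖ ≤ 1 := by
    have := mem_ball_zero_iff.1 hx
    linarith
  have : |c x| ≤ ‖c‖ := by
    have h := c.le_opNorm x
    rw [Real.norm_eq_abs] at h
    nlinarith [norm_nonneg c, norm_nonneg x]
  rw [Set.mem_Icc]
  constructor <;> [nlinarith [abs_le.1 this]; nlinarith [abs_le.1 this]]

end BPBAux

open BPBAux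

set_option maxHeartbeats 1000000 in
theorem bpbp_compact_absolute_summand_range (X Y Y₁ Y₂ : Type*)
    [NormedAddCommGroup X] [NormedSpace ℝ X] [CompleteSpace X]
    [NormedAddCommGroup Y] [NormedSpace ℝ Y] [CompleteSpace Y]
    [NormedAddCommGroup Y₁] [NormedSpace ℝ Y₁] [CompleteSpace Y₁]
    [NormedAddCommGroup Y₂] [NormedSpace ℝ Y₂] [CompleteSpace Y₂]
    (N : ℝ → ℝ → ℝ) (hN : IsAbsoluteNorm N)
    (e : Y ≃L[ℝ] Y₁ × Y₂) (he : ∀ y : Y, ‖y‖ = N ‖(e y).1‖ ‖(e y).2‖)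
    (h : HasBPBpCompact X Y) : HasBPBpCompact X Y₁ := by
  intro ε hε
  set ε' : ℝ := min (ε / 4) (1 / 2) with hε'_def
  have hε'pos : 0 < ε' := lt_min (by linarith) (by norm_num)
  have hε'le : ε' ≤ ε / 4 := min_le_left _ _
  have hε'half : ε' ≤ 1 / 2 := min_le_right _ _
  obtain ⟨η, hηpos, Hη⟩ := h ε' hε'pos
  refine ⟨η, hηpos, ?_⟩
  intro T x₀ hTc hT hx₀ hTx₀
  -- the isometric embedding of Y₁ into Y and the norm-one projections
  set ι : Y₁ →L[ℝ] Y := (e.symm : Y₁ × Y₂ →L[ℝ] Y).comp (ContinuousLinearMap.inl ℝ Y₁ Y₂)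
    with hι_def
  have hιx : ∀ y : Y₁, ι y = e.symm (y, 0) := fun y => rfl
  have hN10 : ∀ s : ℝ, 0 ≤ s → N s 0 = s := fun s hs => by
    rw [left_zero hN, abs_of_nonneg hs]
  have hN01 : ∀ t : ℝ, 0 ≤ t → N 0 t = t := fun t ht => by
    rw [zero_right hN, abs_of_nonneg ht]
  have hιnorm : ∀ y : Y₁, ‖ι y‖ = ‖y‖ := by
    intro y
    rw [hιx, he (e.symm (y, 0)), e.apply_symm_apply]
    simpa using hN10 ‖y‖ (norm_nonneg y)
  -- component norms are dominated by the full norm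
  have hfst : ∀ y : Y, ‖(e y).1‖ ≤ ‖y‖ := by
    intro y
    rw [he y]
    calc ‖(e y).1‖ = N ‖(e y).1‖ 0 := (hN10 _ (norm_nonneg _)).symm
      _ ≤ N ‖(e y).1‖ ‖(e y).2‖ := mono_right hN _ (by simpa using norm_nonneg _)
  have hsnd : ∀ y : Y, ‖(e y).2‖ ≤ ‖y‖ := by
    intro y
    rw [he y]
    calc ‖(e y).2‖ = N 0 ‖(e y).2‖ := (hN01 _ (norm_nonneg _)).symm
      _ ≤ N ‖(e y).1‖ ‖(e y).2‖ := mono_left hN _ (by simpa using norm_nonneg _)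
  set Tt : X →L[ℝ] Y := ι.comp T with hTt_def
  have hTtx : ∀ x, Tt x = ι (T x) := fun x => rfl
  have hTtnormx : ∀ x, ‖Tt x‖ = ‖T x‖ := fun x => by rw [hTtx, hιnorm]
  have hTtnorm : ‖Tt‖ = 1 := by
    apply le_antisymm
    · apply ContinuousLinearMap.opNorm_le_bound _ zero_le_one
      intro x
      rw [hTtnormx, one_mul]
      calc ‖T x‖ ≤ ‖T‖ * ‖x‖ := T.le_opNorm x
        _ = ‖x‖ := by rw [hT, one_mul]
    · rw [← hT]
      apply ContinuousLinearMap.opNorm_le_bound _ (norm_nonneg Tt)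
      intro x
      rw [← hTtnormx]
      exact Tt.le_opNorm x
  have hTtc : IsCompactOperator (⇑Tt) := hTc.continuous_comp ι.continuous
  obtain ⟨St, x₁, hStc, hStnorm, hx₁, hStx₁, hx₁x₀, hStT⟩ :=
    Hη Tt x₀ hTtc hTtnorm hx₀ (by rwa [hTtnormx])
  -- components of St
  set u : Y₁ := (e (St x₁)).1 with hu_def
  set v : Y₂ := (e (St x₁)).2 with hv_def
  have hNab : N ‖u‖ ‖v‖ = 1 := by rw [← he (St x₁)]; exact hStx₁
  -- the second component of St is uniformly small
  have hsndSt : ∀ x, ‖(e (St x)).2‖ ≤ ‖St - Tt‖ * ‖x‖ := by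
    intro x
    have h2 : (e (Tt x)).2 = 0 := by
      rw [hTtx, hιx, e.apply_symm_apply]
    have : (e (St x)).2 = (e ((St - Tt) x)).2 := by
      rw [ContinuousLinearMap.sub_apply, map_sub]
      simp [h2]
    rw [this]
    exact (hsnd _).trans ((St - Tt).le_opNorm x)
  have hb : ‖v‖ < ε' := by
    have := hsndSt x₁
    rw [hx₁, mul_one] at this
    exact lt_of_le_of_lt (hv_def ▸ this) hStT
  have ha1 : ‖u‖ ≤ 1 := by
    have := hfst (St x₁)
    rw [hStx₁] at this
    exact hu_def ▸ this
  have halow : 1 - ε' ≤ ‖u‖ := by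
    have htri : N ‖u‖ ‖v‖ ≤ N ‖u‖ 0 + N 0 ‖v‖ := by
      have := hN.triangle ‖u‖ 0 0 ‖v‖
      simpa using this
    rw [hNab, hN10 _ (norm_nonneg _), hN01 _ (norm_nonneg _)] at htri
    linarith
  have hapos : 0 < ‖u‖ := by
    have : ε' ≤ 1 / 2 := hε'half
    linarith
  -- supporting functional of N at (‖u‖, ‖v‖)
  obtain ⟨p, q, hp0, hq0, hpq, hsupp⟩ := support hN (norm_nonneg u) (norm_nonneg v) hNab
  have hp1 : p ≤ 1 := by
    have := hsupp 1 0 zero_le_one le_rfl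
    rw [hN.one_zero] at this
    linarith
  have hq1 : q ≤ 1 := by
    have := hsupp 0 1 le_rfl zero_le_one
    rw [hN.zero_one] at this
    linarith
  have hplow : 1 - ε' ≤ p := by
    have h1 : p * ‖u‖ ≤ p := by nlinarith
    have h2 : q * ‖v‖ ≤ ‖v‖ := by nlinarith [norm_nonneg v]
    linarith [hb.le]
  -- norming functional for v
  obtain ⟨g, hgnorm, hgval⟩ : ∃ g : Y₂ →L[ℝ] ℝ, ‖g‖ ≤ 1 ∧ g v = ‖v‖ := by
    by_cases hv0 : v = 0
    · exact ⟨0, by simp, by simp [hv0]⟩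
    · obtain ⟨g, hg1, hg2⟩ := exists_dual_vector ℝ v (norm_ne_zero_iff.2 hv0)
      exact ⟨g, le_of_eq hg1, hg2⟩
  set z : Y₁ := (‖u‖)⁻¹ • u with hz_def
  have hznorm : ‖z‖ = 1 := by
    rw [hz_def, norm_smul, Real.norm_eq_abs, abs_inv, abs_of_pos hapos,
      inv_mul_cancel₀ (ne_of_gt hapos)]
  have huz : u = ‖u‖ • z := by
    rw [hz_def, smul_smul, mul_inv_cancel₀ (ne_of_gt hapos), one_smul]
  -- projections as operators
  set P₁ : Y →L[ℝ] Y₁ := (ContinuousLinearMap.fst ℝ Y₁ Y₂).comp (e : Y →L[ℝ] Y₁ × Y₂)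
    with hP₁_def
  set P₂ : Y →L[ℝ] Y₂ := (ContinuousLinearMap.snd ℝ Y₁ Y₂).comp (e : Y →L[ℝ] Y₁ × Y₂)
    with hP₂_def
  have hP₁x : ∀ y : Y, P₁ y = (e y).1 := fun y => rfl
  have hP₂x : ∀ y : Y, P₂ y = (e y).2 := fun y => rfl
  set A : X →L[ℝ] Y₁ := P₁.comp St with hA_def
  set B : X →L[ℝ] Y₂ := P₂.comp St with hB_def
  have hAx : ∀ x, A x = (e (St x)).1 := fun x => rfl
  have hBx : ∀ x, B x = (e (St x)).2 := fun x => rfl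
  -- the new operator
  set S : X →L[ℝ] Y₁ := p • A + (q • (g.comp B)).smulRight z with hS_def
  have hSx : ∀ x, S x = p • A x + (q * g (B x)) • z := by
    intro x
    rw [hS_def]
    simp [ContinuousLinearMap.smulRight_apply, smul_smul]
  have hgB : ∀ x, |g (B x)| ≤ ‖B x‖ := by
    intro x
    have := g.le_opNorm (B x)
    rw [Real.norm_eq_abs] at this
    nlinarith [norm_nonneg (B x)]
  -- pointwise norm bound
  have hS1 : ∀ x, ‖S x‖ ≤ ‖x‖ := by
    intro x
    rw [hSx]
    calc ‖p • A x + (q * g (B x)) • z‖ ≤ ‖p • A x‖ + ‖(q * g (B x)) • z‖ := norm_add_le _ _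
      _ = p * ‖A x‖ + |q * g (B x)| := by
          rw [norm_smul, norm_smul, Real.norm_eq_abs, Real.norm_eq_abs, abs_of_nonneg hp0,
            hznorm, mul_one]
      _ ≤ p * ‖A x‖ + q * ‖B x‖ := by
          have habsmul : |q * g (B x)| = q * |g (B x)| := by rw [abs_mul, abs_of_nonneg hq0]
          rw [habsmul]
          exact add_le_add le_rfl (mul_le_mul_of_nonneg_left (hgB x) hq0)
      _ ≤ N ‖A x‖ ‖B x‖ := hsupp _ _ (norm_nonneg _) (norm_nonneg _)
      _ = ‖St x‖ := by rw [hAx, hBx, ← he (St x)]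
      _ ≤ ‖x‖ := by
          have := St.le_opNorm x
          rwa [hStnorm, one_mul] at this
  have hSx₁ : S x₁ = z := by
    rw [hSx]
    have hA1 : A x₁ = ‖u‖ • z := by
      rw [hz_def, smul_smul, mul_inv_cancel₀ (ne_of_gt hapos), one_smul]
      exact hAx x₁
    have hB1 : g (B x₁) = ‖v‖ := by
      rw [show B x₁ = v from hBx x₁]
      exact hgval
    rw [hA1, hB1, smul_smul, ← add_smul, hpq, one_smul]
  have hSx₁norm : ‖S x₁‖ = 1 := by rw [hSx₁, hznorm]
  have hSnorm : ‖S‖ = 1 := by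
    apply le_antisymm
    · apply ContinuousLinearMap.opNorm_le_bound _ zero_le_one
      intro x
      rw [one_mul]
      exact hS1 x
    · have := S.le_opNorm x₁
      rw [hSx₁norm, hx₁, mul_one] at this
      exact this
  -- compactness
  have hSc : IsCompactOperator (⇑S) := by
    have hAc : IsCompactOperator (⇑A) := hStc.continuous_comp P₁.continuous
    have h1 : IsCompactOperator (⇑(p • A)) := by
      have := hAc.smul p
      have heq : ⇑(p • A) = p • ⇑A := by funext x; simp
      rw [heq]
      exact this
    have h2 : IsCompactOperator (⇑((q • (g.comp B)).smulRight z)) := by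
      have := isCompactOperator_rankOne (q • (g.comp B)) z
      have heq : ⇑((q • (g.comp B)).smulRight z) = fun x => (q • (g.comp B)) x • z := by
        funext x; simp
      rw [heq]
      exact this
    have heq : ⇑S = ⇑(p • A) + ⇑((q • (g.comp B)).smulRight z) := by
      funext x; rw [hS_def]; simp
    rw [heq]
    exact h1.add h2
  -- distance estimate
  have hST : ‖S - T‖ < ε := by
    have hfstSt : ∀ x, ‖A x - T x‖ ≤ ‖St - Tt‖ * ‖x‖ := by
      intro x
      have hTt1 : (e (Tt x)).1 = T x := by rw [hTtx, hιx, e.apply_symm_apply]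
      have : A x - T x = (e ((St - Tt) x)).1 := by
        rw [hAx, ContinuousLinearMap.sub_apply, map_sub]
        simp [hTt1]
      rw [this]
      exact (hfst _).trans ((St - Tt).le_opNorm x)
    have hbound : ∀ x, ‖S x - T x‖ ≤ 3 * ε' * ‖x‖ := by
      intro x
      have hdecomp : S x - T x = p • (A x - T x) + (q * g (B x)) • z - (1 - p) • T x := by
        rw [hSx]
        module
      rw [hdecomp]
      have e1 : ‖p • (A x - T x)‖ ≤ 1 * (ε' * ‖x‖) := by
        rw [norm_smul, Real.norm_eq_abs, abs_of_nonneg hp0]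
        have h1 := hfstSt x
        have h2 : ‖St - Tt‖ * ‖x‖ ≤ ε' * ‖x‖ :=
          mul_le_mul_of_nonneg_right hStT.le (norm_nonneg x)
        rw [one_mul]
        exact (mul_le_of_le_one_left (norm_nonneg _) hp1).trans (h1.trans h2)
      have e2 : ‖(q * g (B x)) • z‖ ≤ 1 * (ε' * ‖x‖) := by
        rw [norm_smul, Real.norm_eq_abs, hznorm, mul_one, abs_mul, abs_of_nonneg hq0]
        have h1 := hgB x
        have h2 : ‖B x‖ ≤ ε' * ‖x‖ := by
          have := hsndSt x
          rw [← hBx] at this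
          have h3 : ‖St - Tt‖ * ‖x‖ ≤ ε' * ‖x‖ :=
            mul_le_mul_of_nonneg_right hStT.le (norm_nonneg x)
          linarith
        rw [one_mul]
        exact (mul_le_of_le_one_left (abs_nonneg _) hq1).trans (h1.trans h2)
      have e3 : ‖(1 - p) • T x‖ ≤ ε' * ‖x‖ := by
        rw [norm_smul, Real.norm_eq_abs, abs_of_nonneg (by linarith : (0:ℝ) ≤ 1 - p)]
        have h1 : ‖T x‖ ≤ ‖x‖ := by
          have := T.le_opNorm x
          rwa [hT, one_mul] at this
        exact mul_le_mul (by linarith) h1 (norm_nonneg _) hε'pos.le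
      calc ‖p • (A x - T x) + (q * g (B x)) • z - (1 - p) • T x‖
          ≤ ‖p • (A x - T x) + (q * g (B x)) • z‖ + ‖(1 - p) • T x‖ := norm_sub_le _ _
        _ ≤ ‖p • (A x - T x)‖ + ‖(q * g (B x)) • z‖ + ‖(1 - p) • T x‖ := by
            have := norm_add_le (p • (A x - T x)) ((q * g (B x)) • z)
            linarith
        _ ≤ 3 * ε' * ‖x‖ := by linarith
    have : ‖S - T‖ ≤ 3 * ε' := by
      apply ContinuousLinearMap.opNorm_le_bound _ (by positivity)
      intro x
      rw [ContinuousLinearMap.sub_apply]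
      exact hbound x
    calc ‖S - T‖ ≤ 3 * ε' := this
      _ ≤ 3 * (ε / 4) := by linarith
      _ < ε := by linarith
  exact ⟨S, x₁, hSc, hSnorm, hx₁, hSx₁norm,
    lt_of_lt_of_le hx₁x₀ (hε'le.trans (by linarith)), hST⟩
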